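/- Let \rho be a probability measure on E \times \mathbb{R} for a standard Borel space E (interpreted as the joint law of (Z, X)), and let F(z, \cdot) denote the conditional cumulative distribution function of X given Z = z (the conditional CDF of \rho). Suppose that for \rho-first-marginal-almost-every z, the function t \mapsto F(z, t) is continuous. Then, under \rho, the random variable (z, x) \mapsto F(z, x) is uniformly distributed on [0,1] and is independent of the first coordinate z; that is, the pushforward of \rho under the map (z, x) \mapsto (z, F(z, x)) equals the product of the first marginal of \rho with the uniform distribution on [0,1]. -/

import Mathlib

open MeasureTheory ProbabilityTheory Set Filter Topology
open scoped ENNReal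

lemma aux_max_eq {α : Type*} [MeasurableSpace α] (μ : Measure α) [IsFiniteMeasure μ]
    (h g : α → ℝ) (hh : Measurable h) (hg : Measurable g)
    (hg0 : ∀ z, 0 ≤ g z) (hg1 : ∀ z, g z ≤ 1)
    (heq : ∀ A : Set α, MeasurableSet A →
      ENNReal.ofReal (∫ z in A, h z ∂μ) = ENNReal.ofReal (∫ z in A, g z ∂μ)) :
    ∀ᵐ z ∂μ, max (h z) 0 = g z := by
  have hgi : Integrable g μ := by
    refine ⟨hg.aestronglyMeasurable, ?_⟩
    refine HasFiniteIntegral.mono' (integrable_const (1:ℝ)).2 ?_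
    filter_upwards with z
    rw [Real.norm_eq_abs, abs_of_nonneg (hg0 z)]; exact hg1 z
  have key : ∀ n : ℕ, ∀ᵐ z ∂μ, |h z| ≤ n → max (h z) 0 = g z := by
    intro n
    set An : Set α := {z | |h z| ≤ (n:ℝ)} with hAndef
    have hAn : MeasurableSet An := measurableSet_le hh.abs measurable_const
    -- integrability of h on subsets of An
    have hInt : ∀ B : Set α, MeasurableSet B → B ⊆ An → IntegrableOn h B μ := by
      intro B hB hBA
      refine ⟨hh.aestronglyMeasurable.restrict, ?_⟩
      refine HasFiniteIntegral.mono' (integrable_const (n:ℝ)).2 ?_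
      filter_upwards [ae_restrict_mem hB] with z hz
      rw [Real.norm_eq_abs]; exact hBA hz
    -- B1 : where g < h
    have hμB1 : μ (An ∩ {z | g z < h z}) = 0 := by
      set B := An ∩ {z | g z < h z} with hBdef
      have hB : MeasurableSet B := hAn.inter (measurableSet_lt hg hh)
      have hhB : IntegrableOn h B μ := hInt B hB inter_subset_left
      have hgle : ∫ z in B, g z ∂μ ≤ ∫ z in B, h z ∂μ :=
        setIntegral_mono_on hgi.integrableOn hhB hB (fun z hz => le_of_lt hz.2)
      have hg_nn : 0 ≤ ∫ z in B, g z ∂μ := setIntegral_nonneg hB (fun z _ => hg0 z)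
      have hieq : ∫ z in B, h z ∂μ = ∫ z in B, g z ∂μ :=
        (ENNReal.ofReal_eq_ofReal_iff (le_trans hg_nn hgle) hg_nn).mp (heq B hB)
      have hsub : ∫ z in B, (h z - g z) ∂μ = 0 := by
        rw [integral_sub hhB hgi.integrableOn, hieq, sub_self]
      have h0 : (fun z => h z - g z) =ᵐ[μ.restrict B] 0 := by
        refine (setIntegral_eq_zero_iff_of_nonneg_ae ?_ (hhB.sub hgi.integrableOn)).mp hsub
        filter_upwards [ae_restrict_mem hB] with z hz
        exact sub_nonneg.mpr (le_of_lt hz.2)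
      have hcontr : ∀ᵐ z ∂(μ.restrict B), False := by
        filter_upwards [h0, ae_restrict_mem hB] with z h1 h2
        have hne : h z - g z ≠ 0 := sub_ne_zero_of_ne (ne_of_gt h2.2)
        exact hne h1
      simpa [ae_iff, Measure.restrict_apply_univ] using hcontr
    -- B2 : where 0 ≤ h < g
    have hμB2 : μ (An ∩ {z | 0 ≤ h z ∧ h z < g z}) = 0 := by
      set B := An ∩ {z | 0 ≤ h z ∧ h z < g z} with hBdef
      have hB : MeasurableSet B :=
        hAn.inter ((measurableSet_le measurable_const hh).inter (measurableSet_lt hh hg))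
      have hhB : IntegrableOn h B μ := hInt B hB inter_subset_left
      have hgle : ∫ z in B, h z ∂μ ≤ ∫ z in B, g z ∂μ :=
        setIntegral_mono_on hhB hgi.integrableOn hB (fun z hz => le_of_lt hz.2.2)
      have hh_nn : 0 ≤ ∫ z in B, h z ∂μ := setIntegral_nonneg hB (fun z hz => hz.2.1)
      have hieq : ∫ z in B, h z ∂μ = ∫ z in B, g z ∂μ :=
        (ENNReal.ofReal_eq_ofReal_iff hh_nn (le_trans hh_nn hgle)).mp (heq B hB)
      have hsub : ∫ z in B, (g z - h z) ∂μ = 0 := by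
        rw [integral_sub hgi.integrableOn hhB, hieq, sub_self]
      have h0 : (fun z => g z - h z) =ᵐ[μ.restrict B] 0 := by
        refine (setIntegral_eq_zero_iff_of_nonneg_ae ?_ (hgi.integrableOn.sub hhB)).mp hsub
        filter_upwards [ae_restrict_mem hB] with z hz
        exact sub_nonneg.mpr (le_of_lt hz.2.2)
      have hcontr : ∀ᵐ z ∂(μ.restrict B), False := by
        filter_upwards [h0, ae_restrict_mem hB] with z h1 h2
        exact (sub_ne_zero_of_ne (ne_of_gt h2.2.2)) h1
      simpa [ae_iff, Measure.restrict_apply_univ] using hcontr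
    -- B3 : where h < 0, there g = 0 a.e.
    have hB3 : MeasurableSet (An ∩ {z | h z < 0}) := hAn.inter (measurableSet_lt hh measurable_const)
    have hμB3 : ∀ᵐ z ∂μ, z ∈ An ∩ {z | h z < 0} → g z = 0 := by
      set B := An ∩ {z | h z < 0} with hBdef
      have hB : MeasurableSet B := hB3
      have hhB : IntegrableOn h B μ := hInt B hB inter_subset_left
      have hh_np : ∫ z in B, h z ∂μ ≤ 0 := setIntegral_nonpos hB (fun z hz => le_of_lt hz.2)
      have h1 : ENNReal.ofReal (∫ z in B, g z ∂μ) = 0 := by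
        rw [← heq B hB, ENNReal.ofReal_eq_zero]; exact hh_np
      have hg_nn : 0 ≤ ∫ z in B, g z ∂μ := setIntegral_nonneg hB (fun z _ => hg0 z)
      have hgz : ∫ z in B, g z ∂μ = 0 :=
        le_antisymm (ENNReal.ofReal_eq_zero.mp h1) hg_nn
      have h0 : g =ᵐ[μ.restrict B] 0 := by
        refine (setIntegral_eq_zero_iff_of_nonneg_ae ?_ hgi.integrableOn).mp hgz
        filter_upwards with z using hg0 z
      exact (ae_restrict_iff' hB).mp h0
    have hn1 : ∀ᵐ z ∂μ, z ∉ An ∩ {z | g z < h z} :=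
      measure_eq_zero_iff_ae_notMem.mp hμB1
    have hn2 : ∀ᵐ z ∂μ, z ∉ An ∩ {z | 0 ≤ h z ∧ h z < g z} :=
      measure_eq_zero_iff_ae_notMem.mp hμB2
    filter_upwards [hn1, hn2, hμB3] with z h1 h2 h3 hzn
    have hzAn : z ∈ An := hzn
    have hle : h z ≤ g z := by
      by_contra hc
      exact h1 ⟨hzAn, lt_of_not_ge hc⟩
    rcases le_or_gt 0 (h z) with hpos | hneg
    · have : ¬ h z < g z := fun hc => h2 ⟨hzAn, hpos, hc⟩
      rw [max_eq_left hpos]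
      exact le_antisymm hle (le_of_not_gt this)
    · rw [max_eq_right (le_of_lt hneg), (h3 ⟨hzAn, hneg⟩)]
  have h1 : ∀ᵐ z ∂μ, ∀ n : ℕ, |h z| ≤ n → max (h z) 0 = g z := ae_all_iff.mpr key
  filter_upwards [h1] with z hz
  obtain ⟨n, hn⟩ := exists_nat_ge |h z|
  exact hz n hn

lemma aux_cdf_measure (μ : Measure ℝ) [IsProbabilityMeasure μ] (h : ℝ → ℝ)
    (hcont : Continuous h)
    (hIic : ∀ t : ℝ, μ (Set.Iic t) = ENNReal.ofReal (max (h t) 0)) (u : ℝ) :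
    μ {x | h x ≤ u} = ENNReal.ofReal (min u 1) := by
  set G : ℝ → ℝ := fun t => max (h t) 0 with hGdef
  have hG0 : ∀ t, 0 ≤ G t := fun t => le_max_right _ _
  have hhG : ∀ t, h t ≤ G t := fun t => le_max_left _ _
  have hG1 : ∀ t, G t ≤ 1 := by
    intro t
    have h1 : ENNReal.ofReal (G t) ≤ ENNReal.ofReal 1 := by
      rw [← hIic t, ENNReal.ofReal_one]
      exact prob_le_one
    exact (ENNReal.ofReal_le_ofReal_iff one_pos.le).mp h1
  have hGmono : Monotone G := by
    intro a b hab
    have h1 : ENNReal.ofReal (G a) ≤ ENNReal.ofReal (G b) := by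
      rw [← hIic a, ← hIic b]; exact measure_mono (Iic_subset_Iic.mpr hab)
    exact (ENNReal.ofReal_le_ofReal_iff (hG0 b)).mp h1
  rcases lt_or_ge u 0 with hu | hu0
  · -- u < 0
    have hmin : min u 1 = u := min_eq_left (hu.le.trans one_pos.le)
    rw [hmin, ENNReal.ofReal_eq_zero.mpr hu.le]
    refine measure_mono_null (t := ⋃ (q : ℚ) (_ : h (q:ℝ) < 0), Iic (q:ℝ)) ?_ ?_
    · intro x hx
      have hx0 : h x < 0 := lt_of_le_of_lt hx hu
      have hopen : IsOpen {y : ℝ | h y < 0} := isOpen_lt hcont continuous_const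
      obtain ⟨ε, hε, hball⟩ := Metric.isOpen_iff.mp hopen x hx0
      obtain ⟨q, hq1, hq2⟩ := exists_rat_btwn (lt_add_of_pos_right x hε)
      have hqmem : (q:ℝ) ∈ {y : ℝ | h y < 0} := by
        apply hball
        rw [Metric.mem_ball, Real.dist_eq, abs_of_pos (sub_pos.mpr hq1)]
        linarith
      exact mem_iUnion₂.mpr ⟨q, hqmem, hq1.le⟩
    · refine measure_iUnion_null fun q => ?_
      by_cases hq : h (q:ℝ) < 0
      · simp only [iUnion_true, hq, hIic, max_eq_right hq.le, ENNReal.ofReal_zero]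
      · simp [iUnion_eq_empty.mpr, hq]
  rcases lt_or_ge u 1 with hu1 | hu1
  · -- 0 ≤ u < 1
    set S : Set ℝ := {x | h x ≤ u} with hSdef
    have hSclosed : IsClosed S := isClosed_le hcont continuous_const
    by_cases hS : S.Nonempty
    · -- bounded above
      have hlim : Tendsto (fun t => μ (Iic t)) atTop (𝓝 (μ univ)) := tendsto_measure_Iic_atTop μ
      have h1lt : ENNReal.ofReal u < μ univ := by
        rw [measure_univ]; exact ENNReal.ofReal_lt_one.mpr hu1
      obtain ⟨t₀, ht₀⟩ := (hlim.eventually (eventually_gt_nhds h1lt)).exists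
      have hGt₀ : u < G t₀ := by
        rw [hIic t₀] at ht₀
        exact (ENNReal.ofReal_lt_ofReal_iff_of_nonneg hu0).mp ht₀
      have hbdd : BddAbove S := by
        refine ⟨t₀, fun x hx => ?_⟩
        by_contra hc
        have : G t₀ ≤ G x := hGmono (le_of_not_ge hc)
        have hGx : G x ≤ u := max_le hx hu0
        linarith
      set t' : ℝ := sSup S with ht'def
      have ht'S : t' ∈ S := hSclosed.csSup_mem hS hbdd
      have hSeq : S = Iic t' := by
        ext x
        constructor
        · exact fun hx => le_csSup hbdd hx
        · intro hx
          have : G x ≤ G t' := hGmono hx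
          have h2 : G t' ≤ u := max_le ht'S hu0
          exact le_trans (hhG x) (le_trans this h2)
      have hseq : Tendsto (fun k : ℕ => t' + 1 / (k + 1 : ℝ)) atTop (𝓝 t') := by
        have := tendsto_one_div_add_atTop_nhds_zero_nat (𝕜 := ℝ)
        have h2 := (tendsto_const_nhds (x := t') (f := atTop (α := ℕ))).add this
        simpa using h2
      have hule : u ≤ h t' := by
        refine ge_of_tendsto ((hcont.tendsto t').comp hseq) ?_
        filter_upwards with k
        have hgt : t' < t' + 1 / (k + 1 : ℝ) := by
          have : (0:ℝ) < 1 / (k + 1 : ℝ) := by positivity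
          linarith
        have hnotS : t' + 1 / (k + 1 : ℝ) ∉ S := by
          rw [hSeq]; exact not_le.mpr hgt
        exact (lt_of_not_ge hnotS).le
      have hht' : h t' = u := le_antisymm ht'S hule
      have : μ S = ENNReal.ofReal u := by
        rw [hSeq, hIic, hht', max_eq_left hu0]
      rw [this, min_eq_left hu1.le]
    · -- S empty, u must be 0
      have hSempty : S = ∅ := not_nonempty_iff_eq_empty.mp hS
      have hu0' : u ≤ 0 := by
        by_contra hc
        push_neg at hc
        have hlim : Tendsto (fun k : ℕ => μ (Iic (-(k:ℝ)))) atTop (𝓝 (μ (⋂ k : ℕ, Iic (-(k:ℝ))))) := by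
          have := tendsto_measure_iInter_atTop (μ := μ)
            (s := fun k : ℕ => Iic (-(k:ℝ)))
            (fun k => measurableSet_Iic.nullMeasurableSet)
            (fun a b hab => Iic_subset_Iic.mpr (by exact_mod_cast neg_le_neg (by exact_mod_cast hab)))
            ⟨0, measure_ne_top μ _⟩
          exact this
        have hempty : (⋂ k : ℕ, Iic (-(k:ℝ))) = ∅ := by
          ext x
          simp only [mem_iInter, mem_Iic, mem_empty_iff_false, iff_false, not_forall, not_le]
          obtain ⟨k, hk⟩ := exists_nat_gt (-x)
          exact ⟨k, by linarith⟩
        rw [hempty, measure_empty] at hlim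
        obtain ⟨k, hk⟩ := (hlim.eventually
          (eventually_lt_nhds (ENNReal.ofReal_pos.mpr hc))).exists
        rw [hIic] at hk
        have : G (-(k:ℝ)) < u := by
          by_contra hc2
          exact absurd (ENNReal.ofReal_le_ofReal (le_of_not_gt hc2)) (not_le.mpr hk)
        have hmem : (-(k:ℝ)) ∈ S := le_of_lt (lt_of_le_of_lt (hhG _) this)
        rw [hSempty] at hmem
        exact hmem
      have : u = 0 := le_antisymm hu0' hu0
      have : μ S = 0 := by rw [hSempty]; exact measure_empty
      rw [this]
      have : u = 0 := le_antisymm hu0' hu0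
      simp [this]
  · -- u ≥ 1
    have hset : {x | h x ≤ u} = univ := by
      ext x
      simp only [mem_setOf_eq, mem_univ, iff_true]
      exact le_trans (hhG x) (le_trans (hG1 x) hu1)
    rw [hset, measure_univ, min_eq_right hu1, ENNReal.ofReal_one]

/-- Parts (ii) and (iii) of Lemma A1 of the paper (continuous case): if `ρ` is
the joint law of `(Z, X)` on `E × ℝ`, `F z` is the conditional CDF of `X` given
`Z = z` (i.e. `ρ(A × (-∞, t]) = ∫_A F z t dρ₁(z)` for all measurable `A` and
all `t`), and `F z` is continuous for `ρ₁`-a.e. `z`, then `V = F Z X` is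
uniformly distributed on `[0,1]` and independent of `Z`: the law of
`(Z, F Z X)` is the product of `ρ₁` with the uniform distribution on `[0,1]`. -/
theorem stmt_13 {E : Type*} [MeasurableSpace E] [StandardBorelSpace E]
    (ρ : Measure (E × ℝ)) [IsProbabilityMeasure ρ]
    (F : E → ℝ → ℝ)
    (hFmeas : Measurable (fun q : E × ℝ => F q.1 q.2))
    (hFdef : ∀ (A : Set E), MeasurableSet A → ∀ t : ℝ,
      ρ (A ×ˢ Set.Iic t) = ENNReal.ofReal (∫ z in A, F z t ∂ρ.fst))
    (hFcont : ∀ᵐ z ∂ρ.fst, Continuous (F z)) :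
    Measure.map (fun q : E × ℝ => (q.1, F q.1 q.2)) ρ =
      (ρ.fst).prod (volume.restrict (Set.Icc (0 : ℝ) 1)) := by
  classical
  set κ := ρ.condKernel with hκdef
  have hdis : ρ.fst ⊗ₘ κ = ρ := ρ.disintegrate κ
  -- Step A : for each rational q, a.e. z, κ z (Iic q) = ofReal (max (F z q) 0)
  have stepA : ∀ q : ℚ, ∀ᵐ z ∂ρ.fst,
      κ z (Iic (q:ℝ)) = ENNReal.ofReal (max (F z (q:ℝ)) 0) := by
    intro q
    have hh : Measurable (fun z => F z (q:ℝ)) :=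
      hFmeas.comp (measurable_id.prodMk measurable_const)
    have hgmeas : Measurable (fun z => (κ z (Iic (q:ℝ))).toReal) :=
      (Kernel.measurable_coe κ measurableSet_Iic).ennreal_toReal
    have hg1 : ∀ z, (κ z (Iic (q:ℝ))).toReal ≤ 1 := by
      intro z
      have h1 : κ z (Iic (q:ℝ)) ≤ 1 := prob_le_one
      calc (κ z (Iic (q:ℝ))).toReal ≤ (1:ℝ≥0∞).toReal :=
            ENNReal.toReal_mono ENNReal.one_ne_top h1
        _ = 1 := ENNReal.toReal_one
    have heq : ∀ A : Set E, MeasurableSet A →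
        ENNReal.ofReal (∫ z in A, F z (q:ℝ) ∂ρ.fst) =
          ENNReal.ofReal (∫ z in A, (κ z (Iic (q:ℝ))).toReal ∂ρ.fst) := by
      intro A hA
      have h1 : ρ (A ×ˢ Iic (q:ℝ)) = ∫⁻ z in A, κ z (Iic (q:ℝ)) ∂ρ.fst := by
        conv_lhs => rw [← hdis]
        exact Measure.compProd_apply_prod hA measurableSet_Iic
      have h2 : ∫⁻ z in A, κ z (Iic (q:ℝ)) ∂ρ.fst ≠ ∞ := by
        refine ne_of_lt (lt_of_le_of_lt ?_ (lt_of_le_of_lt (measure_mono (subset_univ A))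
          (measure_lt_top ρ.fst univ)))
        calc ∫⁻ z in A, κ z (Iic (q:ℝ)) ∂ρ.fst ≤ ∫⁻ _ in A, 1 ∂ρ.fst :=
              lintegral_mono fun z => prob_le_one
          _ = ρ.fst A := by simp
      have h3 : ∫ z in A, (κ z (Iic (q:ℝ))).toReal ∂ρ.fst =
          (∫⁻ z in A, κ z (Iic (q:ℝ)) ∂ρ.fst).toReal := by
        refine integral_toReal ((Kernel.measurable_coe κ measurableSet_Iic).aemeasurable) ?_
        filter_upwards with z using measure_lt_top _ _
      rw [← hFdef A hA (q:ℝ), h1, h3, ENNReal.ofReal_toReal h2]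
    have := aux_max_eq ρ.fst (fun z => F z (q:ℝ)) (fun z => (κ z (Iic (q:ℝ))).toReal)
      hh hgmeas (fun z => ENNReal.toReal_nonneg) hg1 heq
    filter_upwards [this] with z hz
    rw [hz, ENNReal.ofReal_toReal (measure_ne_top _ _)]
  -- Step C : extend to all real t, a.e.
  have stepC : ∀ᵐ z ∂ρ.fst, Continuous (F z) ∧
      ∀ t : ℝ, κ z (Iic t) = ENNReal.ofReal (max (F z t) 0) := by
    filter_upwards [hFcont, ae_all_iff.mpr stepA] with z hzc hzq
    refine ⟨hzc, fun t => ?_⟩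
    have hcontG : Continuous (fun s : ℝ => ENNReal.ofReal (max (F z s) 0)) :=
      ENNReal.continuous_ofReal.comp (hzc.max continuous_const)
    have hinv : ∀ n : ℕ, (0:ℝ) < 1/(n+1) := fun n => by positivity
    have hlim1 : Tendsto (fun n : ℕ => t + 1/(n+1 : ℝ)) atTop (𝓝 t) := by
      have h2 := (tendsto_const_nhds (x := t) (f := atTop (α := ℕ))).add
        tendsto_one_div_add_atTop_nhds_zero_nat
      simpa using h2
    have hlim2 : Tendsto (fun n : ℕ => t - 1/(n+1 : ℝ)) atTop (𝓝 t) := by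
      have h2 := (tendsto_const_nhds (x := t) (f := atTop (α := ℕ))).sub
        tendsto_one_div_add_atTop_nhds_zero_nat
      simpa using h2
    -- upper bound
    have hub : κ z (Iic t) ≤ ENNReal.ofReal (max (F z t) 0) := by
      have hex : ∀ n : ℕ, ∃ q : ℚ, t < (q:ℝ) ∧ (q:ℝ) < t + 1/(n+1) :=
        fun n => exists_rat_btwn (by linarith [hinv n])
      choose q hq1 hq2 using hex
      have hqt : Tendsto (fun n : ℕ => ((q n : ℝ))) atTop (𝓝 t) :=
        tendsto_of_tendsto_of_tendsto_of_le_of_le tendsto_const_nhds hlim1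
          (fun n => (hq1 n).le) (fun n => (hq2 n).le)
      refine ge_of_tendsto' ((hcontG.tendsto t).comp hqt) (fun n => ?_)
      simp only [Function.comp_apply]
      rw [← hzq (q n)]
      exact measure_mono (Iic_subset_Iic.mpr (hq1 n).le)
    have hlb : ENNReal.ofReal (max (F z t) 0) ≤ κ z (Iic t) := by
      have hex : ∀ n : ℕ, ∃ q : ℚ, t - 1/(n+1) < (q:ℝ) ∧ (q:ℝ) < t :=
        fun n => exists_rat_btwn (by linarith [hinv n])
      choose q hq1 hq2 using hex
      have hqt : Tendsto (fun n : ℕ => ((q n : ℝ))) atTop (𝓝 t) :=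
        tendsto_of_tendsto_of_tendsto_of_le_of_le hlim2 tendsto_const_nhds
          (fun n => (hq1 n).le) (fun n => (hq2 n).le)
      refine le_of_tendsto' ((hcontG.tendsto t).comp hqt) (fun n => ?_)
      simp only [Function.comp_apply]
      rw [← hzq (q n)]
      exact measure_mono (Iic_subset_Iic.mpr (hq2 n).le)
    exact le_antisymm hub hlb
  -- Step D : a.e. z, for all u, κ z {x | F z x ≤ u} = ofReal (min u 1)
  have stepD : ∀ᵐ z ∂ρ.fst, ∀ u : ℝ,
      κ z {x | F z x ≤ u} = ENNReal.ofReal (min u 1) := by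
    filter_upwards [stepC] with z hz u
    exact aux_cdf_measure (κ z) (F z) hz.1 hz.2 u
  -- measurability of the map
  have hT : Measurable (fun q : E × ℝ => (q.1, F q.1 q.2)) :=
    measurable_fst.prodMk hFmeas
  haveI : IsProbabilityMeasure (Measure.map (fun q : E × ℝ => (q.1, F q.1 q.2)) ρ) :=
    Measure.isProbabilityMeasure_map hT.aemeasurable
  -- π-system extension
  have hD : MeasurableSpace.generateFrom (range (Iic : ℝ → Set ℝ)) =
      (inferInstance : MeasurableSpace ℝ) :=
    (borel_eq_generateFrom_Iic ℝ).symm.trans (BorelSpace.measurable_eq (α := ℝ)).symm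
  have hspanIic : IsCountablySpanning (range (Iic : ℝ → Set ℝ)) := by
    refine ⟨fun n => Iic (n:ℝ), fun n => mem_range_self _, ?_⟩
    ext x
    simp only [mem_iUnion, mem_Iic, mem_univ, iff_true]
    exact exists_nat_ge x
  refine ext_of_generate_finite
    (image2 (· ×ˢ ·) {A : Set E | MeasurableSet A} (range (Iic : ℝ → Set ℝ)))
    (generateFrom_eq_prod MeasurableSpace.generateFrom_measurableSet hD
      isCountablySpanning_measurableSet hspanIic).symm
    (MeasurableSpace.isPiSystem_measurableSet.prod isPiSystem_Iic) ?_ ?_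
  · rintro s ⟨A, hA, B, ⟨u, rfl⟩, rfl⟩
    have hAmeas : MeasurableSet A := hA
    have hsm : MeasurableSet (A ×ˢ Iic u) := hAmeas.prod measurableSet_Iic
    rw [Measure.map_apply hT hsm]
    conv_lhs => rw [← hdis]
    rw [Measure.compProd_apply (hT hsm)]
    have hpre : ∀ z : E, (Prod.mk z ⁻¹' ((fun q : E × ℝ => (q.1, F q.1 q.2)) ⁻¹' (A ×ˢ Iic u)))
        = if z ∈ A then {x : ℝ | F z x ≤ u} else (∅ : Set ℝ) := by
      intro z
      by_cases hz : z ∈ A <;> ext x <;> simp [hz]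
    have hint : ∫⁻ z, κ z (Prod.mk z ⁻¹'
          ((fun q : E × ℝ => (q.1, F q.1 q.2)) ⁻¹' (A ×ˢ Iic u))) ∂ρ.fst
        = ∫⁻ z, A.indicator (fun _ => ENNReal.ofReal (min u 1)) z ∂ρ.fst := by
      refine lintegral_congr_ae ?_
      filter_upwards [stepD] with z hz
      rw [hpre z]
      by_cases hzA : z ∈ A
      · simp only [if_pos hzA, indicator_of_mem hzA]
        exact hz u
      · simp [if_neg hzA, indicator_of_notMem hzA]
    rw [hint, lintegral_indicator hAmeas, setLIntegral_const]
    have hIcc : Iic u ∩ Icc (0:ℝ) 1 = Icc (0:ℝ) (min u 1) := by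
      ext x
      simp only [mem_inter_iff, mem_Iic, mem_Icc, le_min_iff]
      constructor
      · rintro ⟨h1, h2, h3⟩; exact ⟨h2, h1, h3⟩
      · rintro ⟨h1, h2, h3⟩; exact ⟨h2, h1, h3⟩
    rw [Measure.prod_prod, Measure.restrict_apply measurableSet_Iic, hIcc, Real.volume_Icc]
    rw [mul_comm]
    norm_num
  · rw [measure_univ, ← univ_prod_univ, Measure.prod_prod, measure_univ,
      Measure.restrict_apply_univ, Real.volume_Icc]
    norm_num
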